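/- Let (w_k)_{k∈N} be a sequence in R^d with ‖w_k‖ ≤ 1 for all k, let λ ≥ 1 and define W_k = λI + Σ_{s=1}^{k−1} w_s w_s^T. Then for all K, Σ_{k=1}^K ‖w_k‖²_{W_k^{-1}} ≤ 2d log(1 + K/(λd)). -/

import Mathlib

open Matrix Finset

lemma ep_vecMulVec_psd {d : ℕ} (v : Fin d → ℝ) : (vecMulVec v v).PosSemidef := by
  rw [vecMulVec_eq (Fin 1)]
  convert Matrix.posSemidef_self_mul_conjTranspose (Matrix.replicateCol (Fin 1) v) using 1
  ext i j; simp [Matrix.mul_apply]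

lemma ep_trace_eq_sum_eig {d : ℕ} {A : Matrix (Fin d) (Fin d) ℝ} (hA : A.IsHermitian) :
    A.trace = ∑ i, hA.eigenvalues i := by
  simpa using hA.trace_eq_sum_eigenvalues

lemma ep_det_lemma {d : ℕ} (M : Matrix (Fin d) (Fin d) ℝ) (hM : IsUnit M.det) (v : Fin d → ℝ) :
    (M + vecMulVec v v).det = M.det * (1 + v ⬝ᵥ M⁻¹.mulVec v) := by
  rw [vecMulVec_eq (Fin 1), Matrix.det_add_replicateCol_mul_replicateRow hM, Matrix.mul_assoc,
    ← Matrix.replicateCol_mulVec, Matrix.replicateRow_mul_replicateCol]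
  congr 1
  simp [Matrix.det_unique, Matrix.one_apply]

lemma ep_amgm {d : ℕ} (z : Fin d → ℝ) (hz : ∀ i, 0 ≤ z i) :
    ∏ i, z i ≤ ((∑ i, z i) / d) ^ d := by
  rcases Nat.eq_zero_or_pos d with hd | hd
  · subst hd; simp
  have h := Real.geom_mean_le_arith_mean_weighted Finset.univ (fun _ => (d : ℝ)⁻¹) z
    (fun i _ => by positivity) (by simp [Finset.card_univ]; field_simp) (fun i _ => hz i)
  have h2 : (∏ i, z i ^ ((d:ℝ)⁻¹)) ^ d ≤ (∑ i, (d:ℝ)⁻¹ * z i) ^ d :=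
    pow_le_pow_left₀ (Finset.prod_nonneg fun i _ => Real.rpow_nonneg (hz i) _) h d
  have h3 : (∏ i, z i ^ ((d:ℝ)⁻¹)) ^ d = ∏ i, z i := by
    rw [← Finset.prod_pow]
    congr 1; ext i
    rw [← Real.rpow_natCast (z i ^ ((d:ℝ)⁻¹)) d, ← Real.rpow_mul (hz i),
      inv_mul_cancel₀ (by positivity : (d:ℝ) ≠ 0), Real.rpow_one]
  have h4 : ∑ i, (d:ℝ)⁻¹ * z i = (∑ i, z i) / d := by
    rw [← Finset.mul_sum]; ring
  rw [h3, h4] at h2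
  exact h2

lemma ep_x_le_two_log {x : ℝ} (h0 : 0 ≤ x) (h1 : x ≤ 1) : x ≤ 2 * Real.log (1 + x) := by
  have hp : (0:ℝ) < 1 + x := by linarith
  have := Real.one_sub_inv_le_log_of_pos hp
  have hinv : 1 - (1 + x)⁻¹ = x / (1 + x) := by field_simp; ring
  rw [hinv] at this
  have h2 : x / 2 ≤ x / (1 + x) :=
    div_le_div_of_nonneg_left h0 hp (by linarith)
  linarith

theorem elliptic_potential (d : ℕ) (w : ℕ → Fin d → ℝ)
    (hw : ∀ k, Real.sqrt (w k ⬝ᵥ w k) ≤ 1) (lam : ℝ) (hlam : 1 ≤ lam)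
    (W : ℕ → Matrix (Fin d) (Fin d) ℝ)
    (hW : ∀ k, W k = lam • (1 : Matrix (Fin d) (Fin d) ℝ) +
      ∑ s ∈ Finset.range k, Matrix.vecMulVec (w s) (w s)) :
    ∀ K : ℕ, ∑ k ∈ Finset.range K, w k ⬝ᵥ (W k)⁻¹.mulVec (w k) ≤
      2 * d * Real.log (1 + K / (lam * d)) := by
  intro K
  rcases Nat.eq_zero_or_pos d with hd | hd
  · subst hd
    simp [dotProduct]
  have hlam0 : (0:ℝ) < lam := by linarith
  have hd0 : (0:ℝ) < d := by exact_mod_cast hd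
  have hPsd : ∀ k, (∑ s ∈ Finset.range k, vecMulVec (w s) (w s)).PosSemidef := by
    intro k
    exact Finset.sum_induction _ _ (fun a b ha hb => ha.add hb) .zero
      (fun s _ => ep_vecMulVec_psd (w s))
  have hpd : ∀ k, (W k).PosDef := by
    intro k
    rw [hW k]
    have h1 : (lam • (1 : Matrix (Fin d) (Fin d) ℝ)).PosDef := by
      rw [Matrix.smul_one_eq_diagonal]
      exact Matrix.posDef_diagonal_iff.mpr fun _ => hlam0
    exact h1.add_posSemidef (hPsd k)
  set q : ℕ → ℝ := fun k => w k ⬝ᵥ (W k)⁻¹.mulVec (w k) with hqdef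
  have hww0 : ∀ k, 0 ≤ w k ⬝ᵥ w k := fun k =>
    Finset.sum_nonneg fun i _ => mul_self_nonneg _
  have hww : ∀ k, w k ⬝ᵥ w k ≤ 1 := by
    intro k
    nlinarith [Real.sq_sqrt (hww0 k), Real.sqrt_nonneg (w k ⬝ᵥ w k), hw k]
  have hq0 : ∀ k, 0 ≤ q k := by
    intro k
    simpa using ((hpd k).inv).posSemidef.dotProduct_mulVec_nonneg (w k)
  have hq1 : ∀ k, q k ≤ 1 := by
    intro k
    have hM := hpd k
    set v : Fin d → ℝ := (W k)⁻¹ *ᵥ w k with hv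
    have hMv : W k *ᵥ v = w k := by
      rw [hv, Matrix.mulVec_mulVec, Matrix.mul_nonsing_inv _ hM.det_pos.ne'.isUnit,
        Matrix.one_mulVec]
    have hvv0 : 0 ≤ v ⬝ᵥ v := Finset.sum_nonneg fun i _ => mul_self_nonneg _
    have hlow : lam * (v ⬝ᵥ v) ≤ q k := by
      have h1 : v ⬝ᵥ (W k *ᵥ v) = q k := by
        rw [hMv, dotProduct_comm]
      rw [← h1]
      rw [hW k]
      rw [Matrix.add_mulVec, dotProduct_add]
      have h2 : v ⬝ᵥ ((lam • (1 : Matrix (Fin d) (Fin d) ℝ)) *ᵥ v) = lam * (v ⬝ᵥ v) := by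
        rw [Matrix.smul_mulVec, Matrix.one_mulVec, dotProduct_smul, smul_eq_mul]
      have h3 : 0 ≤ v ⬝ᵥ ((∑ s ∈ Finset.range k, vecMulVec (w s) (w s)) *ᵥ v) := by
        simpa using (hPsd k).dotProduct_mulVec_nonneg v
      linarith
    have hcs : (w k ⬝ᵥ v)^2 ≤ (w k ⬝ᵥ w k) * (v ⬝ᵥ v) := by
      have := Finset.sum_mul_sq_le_sq_mul_sq Finset.univ (w k) v
      simpa [dotProduct, sq] using this
    have hqv : q k = w k ⬝ᵥ v := rfl
    rw [hqv] at hlow ⊢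
    nlinarith [hq0 k, hww k, hcs, hlow, hvv0, hww0 k]
  have hdetpos : ∀ k, 0 < (W k).det := fun k => (hpd k).det_pos
  have hdet : ∀ k, (W (k+1)).det = (W k).det * (1 + q k) := by
    intro k
    have h1 : W (k+1) = W k + vecMulVec (w k) (w k) := by
      rw [hW (k+1), hW k, Finset.sum_range_succ, add_assoc]
    rw [h1, ep_det_lemma _ (hdetpos k).ne'.isUnit]
  have hlog : ∀ n, Real.log ((W n).det) =
      d * Real.log lam + ∑ k ∈ Finset.range n, Real.log (1 + q k) := by
    intro n
    induction n with
    | zero =>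
      rw [hW 0]
      simp only [Finset.range_zero, Finset.sum_empty, add_zero]
      rw [Matrix.smul_one_eq_diagonal, Matrix.det_diagonal]
      simp [Real.log_pow]
    | succ n ih =>
      have hne : (1:ℝ) + q n ≠ 0 := by nlinarith [hq0 n]
      rw [hdet n, Real.log_mul (hdetpos n).ne' hne, ih, Finset.sum_range_succ]
      ring
  have htrvec : ∀ s : ℕ, (vecMulVec (w s) (w s)).trace = w s ⬝ᵥ w s := by
    intro s
    simp [Matrix.trace, Matrix.diag, vecMulVec_apply, dotProduct]
  have htr : (W K).trace ≤ lam * d + K := by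
    rw [hW K, Matrix.trace_add, Matrix.trace_smul, Matrix.trace_one, Matrix.trace_sum]
    simp only [htrvec, smul_eq_mul]
    have h5 : ∑ s ∈ Finset.range K, w s ⬝ᵥ w s ≤ ∑ s ∈ Finset.range K, (1:ℝ) :=
      Finset.sum_le_sum fun s _ => hww s
    simp only [Finset.sum_const, Finset.card_range, nsmul_eq_mul, mul_one] at h5
    have hcard : (Fintype.card (Fin d) : ℝ) = d := by simp
    rw [hcard]
    linarith
  have htrlo : lam * d ≤ (W K).trace := by
    rw [hW K, Matrix.trace_add, Matrix.trace_smul, Matrix.trace_one, Matrix.trace_sum]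
    simp only [htrvec, smul_eq_mul]
    have h5 : (0:ℝ) ≤ ∑ s ∈ Finset.range K, w s ⬝ᵥ w s :=
      Finset.sum_nonneg fun s _ => hww0 s
    have hcard : (Fintype.card (Fin d) : ℝ) = d := by simp
    rw [hcard]
    linarith
  have htrpos : (0:ℝ) < (W K).trace := lt_of_lt_of_le (by positivity) htrlo
  have hdetle : (W K).det ≤ ((W K).trace / d) ^ d := by
    have hH := (hpd K).isHermitian
    have hamgm := ep_amgm hH.eigenvalues (fun i => ((hpd K).eigenvalues_pos i).le)
    rw [← ep_trace_eq_sum_eig hH] at hamgm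
    have hdeq : (W K).det = ∏ i, hH.eigenvalues i := by
      simpa using hH.det_eq_prod_eigenvalues
    rw [hdeq]
    exact hamgm
  have e1 : Real.log ((W K).det) ≤ d * Real.log ((W K).trace / d) := by
    calc Real.log ((W K).det) ≤ Real.log (((W K).trace / d) ^ d) :=
          Real.log_le_log (hdetpos K) hdetle
      _ = d * Real.log ((W K).trace / d) := by rw [Real.log_pow]
  have e2 : Real.log ((W K).trace / d) - Real.log lam
      = Real.log ((W K).trace / (lam * d)) := by
    rw [← Real.log_div (by positivity) hlam0.ne', div_div, mul_comm (d:ℝ) lam]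
  have e3 : Real.log ((W K).trace / (lam * d)) ≤ Real.log (1 + K / (lam * d)) := by
    apply Real.log_le_log (by positivity)
    rw [div_le_iff₀ (by positivity)]
    have hk0 : (0:ℝ) ≤ (K:ℝ) := Nat.cast_nonneg K
    have h6 : (1 + (K:ℝ) / (lam * d)) * (lam * d) = lam * d + K := by field_simp
    rw [h6]
    linarith
  calc ∑ k ∈ Finset.range K, q k
      ≤ ∑ k ∈ Finset.range K, 2 * Real.log (1 + q k) :=
        Finset.sum_le_sum fun k _ => ep_x_le_two_log (hq0 k) (hq1 k)
    _ = 2 * (Real.log ((W K).det) - d * Real.log lam) := by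
        rw [← Finset.mul_sum, hlog K]; ring
    _ ≤ 2 * d * Real.log (1 + K / (lam * d)) := by nlinarith [e1, e2, e3, hd0]
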